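/- Let b ≥ 1 and K ≥ 1 be integers and let g ∈ ℂ^K have all entries g_k nonzero. For ω ∈ ℝ define the vector ψ(ω) ∈ F_b^K componentwise by (ψ(ω))_k = ψ̂_{g_k}(ω). Define the finite set F_g = { arg(g_k) + (2π/2^b)·( ⌈ −(2^b·arg(g_k))/(2π) − 1/2 ⌉ + s + 1/2 ) : s = 0, 1, …, 2^b − 1, k = 1, …, K }, which has at most 2^b·K elements. Then sup_{ω ∈ [0, 2π)} |ψ(ω)ᵀ g|² = max_{ω ∈ F_g} |ψ(ω)ᵀ g|², where ψ(ω)ᵀ g = Σ_{k=1}^K (ψ(ω))_k g_k. -/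

import Mathlib

open scoped Real

/-- The ω-beamformer phase
`ψ̂_g(ω) = exp(i·(2π/2^b)·round(−(2^b/(2π))·arg g + (2^b/(2π))·ω))`. -/
noncomputable def psiHat (b : ℕ) (g : ℂ) (ω : ℝ) : ℂ :=
  Complex.exp (Complex.I * ((2 * π / 2 ^ b : ℝ) : ℂ) *
    ((round ((-(2 ^ b / (2 * π)) * Complex.arg g + (2 ^ b / (2 * π)) * ω : ℝ)) : ℤ) : ℂ))

/-- The finite search set
`F_g = { arg(g_k) + (2π/2^b)·(⌈−(2^b·arg(g_k))/(2π) − 1/2⌉ + s + 1/2) :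
  s = 0, …, 2^b − 1, k = 1, …, K }`. -/
noncomputable def searchSet {K : ℕ} (b : ℕ) (g : Fin K → ℂ) : Set ℝ :=
  {x | ∃ s : ℕ, s < 2 ^ b ∧ ∃ k : Fin K,
    x = Complex.arg (g k) + (2 * π / 2 ^ b) *
      ((⌈-(2 ^ b * Complex.arg (g k)) / (2 * π) - 1 / 2⌉ : ℤ) + (s : ℝ) + 1 / 2)}

/-- Breakpoints of the `round` step function for gain `g`. -/
noncomputable def brk (b : ℕ) (g : ℂ) (m : ℤ) : ℝ :=
  Complex.arg g + (2 * π / 2 ^ b) * ((m : ℝ) + 1 / 2)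

lemma brk_le_iff (b : ℕ) (g : ℂ) (ω : ℝ) (m : ℤ) :
    brk b g m ≤ ω ↔
      (m : ℝ) + 1 / 2 ≤ -(2 ^ b / (2 * π)) * Complex.arg g + (2 ^ b / (2 * π)) * ω := by
  have hP : (0 : ℝ) < π := Real.pi_pos
  have hB : (0 : ℝ) < (2 : ℝ) ^ b := by positivity
  have e1 : (2 ^ b / (2 * π)) * ((2 * π / 2 ^ b) * ((m : ℝ) + 1 / 2)) = (m : ℝ) + 1 / 2 := by
    field_simp
  have e2 : (2 * π / 2 ^ b) * ((2 ^ b / (2 * π)) * (ω - Complex.arg g)) = ω - Complex.arg g := by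
    field_simp
  have e3 : (2 ^ b / (2 * π)) * (ω - Complex.arg g)
      = -(2 ^ b / (2 * π)) * Complex.arg g + (2 ^ b / (2 * π)) * ω := by ring
  rw [brk]
  constructor
  · intro h
    have h' : (2 * π / 2 ^ b) * ((m : ℝ) + 1 / 2) ≤ ω - Complex.arg g := by linarith
    have h2 := mul_le_mul_of_nonneg_left h' (by positivity : (0:ℝ) ≤ 2 ^ b / (2 * π))
    rw [e1] at h2
    linarith
  · intro h
    have h' : (m : ℝ) + 1 / 2 ≤ (2 ^ b / (2 * π)) * (ω - Complex.arg g) := by linarith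
    have h2 := mul_le_mul_of_nonneg_left h' (by positivity : (0:ℝ) ≤ 2 * π / 2 ^ b)
    rw [e2] at h2
    linarith

lemma lt_brk_iff (b : ℕ) (g : ℂ) (ω : ℝ) (m : ℤ) :
    ω < brk b g m ↔
      -(2 ^ b / (2 * π)) * Complex.arg g + (2 ^ b / (2 * π)) * ω < (m : ℝ) + 1 / 2 := by
  rw [← not_le, ← not_le, brk_le_iff]

lemma round_brk_iff (b : ℕ) (g : ℂ) (ω : ℝ) (n : ℤ) :
    round ((-(2 ^ b / (2 * π)) * Complex.arg g + (2 ^ b / (2 * π)) * ω : ℝ)) = n ↔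
      brk b g (n - 1) ≤ ω ∧ ω < brk b g n := by
  rw [round_eq, Int.floor_eq_iff, brk_le_iff, lt_brk_iff]
  push_cast
  constructor
  · rintro ⟨h1, h2⟩; exact ⟨by linarith, by linarith⟩
  · rintro ⟨h1, h2⟩; exact ⟨by linarith, by linarith⟩

lemma psiHat_add_two_pi (b : ℕ) (g : ℂ) (ω : ℝ) :
    psiHat b g (ω + 2 * π) = psiHat b g ω := by
  have hP : (0 : ℝ) < π := Real.pi_pos
  have hB : ((2 : ℝ) ^ b) ≠ 0 := by positivity
  have hBC : ((2 : ℂ) ^ b) ≠ 0 := by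
    simp [pow_ne_zero]
  have hPC : (π : ℂ) ≠ 0 := by exact_mod_cast hP.ne'
  unfold psiHat
  have h1 : (-(2 ^ b / (2 * π)) * Complex.arg g + (2 ^ b / (2 * π)) * (ω + 2 * π) : ℝ)
      = (-(2 ^ b / (2 * π)) * Complex.arg g + (2 ^ b / (2 * π)) * ω : ℝ) + ((2 ^ b : ℤ) : ℝ) := by
    push_cast
    field_simp
    ring
  rw [h1, round_add_intCast]
  set n : ℤ := round ((-(2 ^ b / (2 * π)) * Complex.arg g + (2 ^ b / (2 * π)) * ω : ℝ)) with hn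
  have h2 : Complex.I * ((2 * π / 2 ^ b : ℝ) : ℂ) * ((n + 2 ^ b : ℤ) : ℂ)
      = Complex.I * ((2 * π / 2 ^ b : ℝ) : ℂ) * ((n : ℤ) : ℂ) + 2 * (π : ℂ) * Complex.I := by
    push_cast
    field_simp
  rw [h2, Complex.exp_add, Complex.exp_two_pi_mul_I, mul_one]

lemma mem_searchSet_of_brk {K : ℕ} (b : ℕ) (g : Fin K → ℂ) (k : Fin K) (m : ℤ)
    (h0 : 0 ≤ brk b (g k) m) (h2 : brk b (g k) m < 2 * π) :
    brk b (g k) m ∈ searchSet b g := by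
  have hP : (0 : ℝ) < π := Real.pi_pos
  have hB : (0 : ℝ) < (2 : ℝ) ^ b := by positivity
  set A : ℝ := Complex.arg (g k) with hA
  set y : ℝ := -(2 ^ b * A) / (2 * π) - 1 / 2 with hy
  set M : ℤ := ⌈y⌉ with hM
  -- M ≤ m
  have hMm : M ≤ m := by
    rw [hM, Int.ceil_le]
    have hkey : (A + (2 * π / 2 ^ b) * ((m : ℝ) + 1 / 2)) * (2 ^ b / (2 * π))
        = 2 ^ b * A / (2 * π) + ((m : ℝ) + 1 / 2) := by
      field_simp
    have h3 := mul_nonneg h0 (by positivity : (0:ℝ) ≤ 2 ^ b / (2 * π))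
    rw [brk] at h3
    rw [hkey] at h3
    rw [hy]
    have : -(2 ^ b * A) / (2 * π) = -(2 ^ b * A / (2 * π)) := by ring
    rw [this]
    linarith
  -- m < M + 2^b
  have hmM : m < M + 2 ^ b := by
    have hub : (↑(m - 2 ^ b) : ℝ) < y := by
      have hkey : (A + (2 * π / 2 ^ b) * ((m : ℝ) + 1 / 2)) * (2 ^ b / (2 * π))
          = 2 ^ b * A / (2 * π) + ((m : ℝ) + 1 / 2) := by
        field_simp
      have h2' : brk b (g k) m * (2 ^ b / (2 * π)) < 2 * π * (2 ^ b / (2 * π)) :=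
        mul_lt_mul_of_pos_right h2 (by positivity)
      rw [brk, hkey] at h2'
      have he : 2 * π * (2 ^ b / (2 * π)) = (2 : ℝ) ^ b := by field_simp
      rw [he] at h2'
      have : -(2 ^ b * A) / (2 * π) = -(2 ^ b * A / (2 * π)) := by ring
      rw [hy, this]
      push_cast
      linarith
    have h5 := Int.lt_ceil.mpr hub
    rw [← hM] at h5
    linarith
  refine ⟨(m - M).toNat, ?_, k, ?_⟩
  · rw [Int.toNat_lt' (Nat.pow_pos (n := b) (by norm_num : 0 < 2))]
    push_cast
    linarith
  · have hs : ((m - M).toNat : ℝ) = (m : ℝ) - (M : ℝ) := by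
      have : ((m - M).toNat : ℤ) = m - M := Int.toNat_of_nonneg (by omega)
      exact_mod_cast this
    rw [brk, hs, ← hA, ← hy, ← hM]
    ring

lemma searchSet_subset_Ico {K : ℕ} (b : ℕ) (g : Fin K → ℂ) :
    searchSet b g ⊆ Set.Ico (0 : ℝ) (2 * π) := by
  rintro x ⟨s, hs, k, rfl⟩
  have hP : (0 : ℝ) < π := Real.pi_pos
  have hB : (0 : ℝ) < (2 : ℝ) ^ b := by positivity
  set A : ℝ := Complex.arg (g k) with hA
  set y : ℝ := -(2 ^ b * A) / (2 * π) - 1 / 2 with hy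
  set M : ℤ := ⌈y⌉ with hM
  have hyM : y ≤ (M : ℝ) := Int.le_ceil y
  have hMy : (M : ℝ) < y + 1 := Int.ceil_lt_add_one y
  have hs' : (s : ℝ) ≤ 2 ^ b - 1 := by
    have : (s : ℝ) + 1 ≤ ((2 ^ b : ℕ) : ℝ) := by exact_mod_cast hs
    push_cast at this
    linarith
  have hzero : A + (2 * π / 2 ^ b) * (y + 1 / 2) = 0 := by
    rw [hy]
    field_simp
    ring
  clear_value A y M
  constructor
  · have hle : y + 1 / 2 ≤ (M : ℝ) + (s : ℝ) + 1 / 2 := by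
      have : (0 : ℝ) ≤ (s : ℝ) := Nat.cast_nonneg s
      linarith
    have := mul_le_mul_of_nonneg_left hle (by positivity : (0:ℝ) ≤ 2 * π / 2 ^ b)
    linarith
  · have hlt : (M : ℝ) + (s : ℝ) + 1 / 2 < y + 1 / 2 + 2 ^ b := by linarith
    have h4 := mul_lt_mul_of_pos_left hlt (by positivity : (0:ℝ) < 2 * π / 2 ^ b)
    have he : (2 * π / 2 ^ b) * (y + 1 / 2 + 2 ^ b)
        = (2 * π / 2 ^ b) * (y + 1 / 2) + 2 * π := by
      field_simp
    rw [he] at h4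
    linarith

theorem stmt3 {b K : ℕ} (hb : 1 ≤ b) (hK : 1 ≤ K)
    (g : Fin K → ℂ) (hg : ∀ k, g k ≠ 0) :
    ∃ ω₀ ∈ searchSet b g,
      (∀ ω ∈ searchSet b g,
        ‖∑ k, psiHat b (g k) ω * g k‖ ^ 2 ≤
          ‖∑ k, psiHat b (g k) ω₀ * g k‖ ^ 2) ∧
      sSup ((fun ω => ‖∑ k, psiHat b (g k) ω * g k‖ ^ 2) ''
          Set.Ico (0 : ℝ) (2 * π)) =
        ‖∑ k, psiHat b (g k) ω₀ * g k‖ ^ 2 := by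
  classical
  have hP : (0 : ℝ) < π := Real.pi_pos
  have hB : (0 : ℝ) < (2 : ℝ) ^ b := by positivity
  haveI : Nonempty (Fin K) := ⟨⟨0, hK⟩⟩
  set f : ℝ → ℝ := fun ω => ‖∑ k, psiHat b (g k) ω * g k‖ ^ 2 with hf
  -- congruence of f through rounds
  have fcong : ∀ ω ω' : ℝ,
      (∀ k, round ((-(2 ^ b / (2 * π)) * Complex.arg (g k) + (2 ^ b / (2 * π)) * ω : ℝ))
        = round ((-(2 ^ b / (2 * π)) * Complex.arg (g k) + (2 ^ b / (2 * π)) * ω' : ℝ)))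
      → f ω = f ω' := by
    intro ω ω' h
    have hsum : (∑ k, psiHat b (g k) ω * g k) = ∑ k, psiHat b (g k) ω' * g k :=
      Finset.sum_congr rfl fun k _ => by unfold psiHat; rw [h k]
    simp only [hf, hsum]
  have fper : ∀ ω : ℝ, f (ω + 2 * π) = f ω := by
    intro ω
    have hsum : (∑ k, psiHat b (g k) (ω + 2 * π) * g k) = ∑ k, psiHat b (g k) ω * g k :=
      Finset.sum_congr rfl fun k _ => by rw [psiHat_add_two_pi]
    simp only [hf, hsum]
  -- key step: every point of [0, 2π) has a representative in the search set
  have key : ∀ ω ∈ Set.Ico (0 : ℝ) (2 * π), ∃ ω' ∈ searchSet b g, f ω' = f ω := by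
    intro ω hω
    set n : Fin K → ℤ := fun k =>
      round ((-(2 ^ b / (2 * π)) * Complex.arg (g k) + (2 ^ b / (2 * π)) * ω : ℝ)) with hn
    have hnk : ∀ k, brk b (g k) (n k - 1) ≤ ω ∧ ω < brk b (g k) (n k) := fun k =>
      (round_brk_iff b (g k) ω (n k)).mp rfl
    set β : ℝ := Finset.univ.sup' Finset.univ_nonempty (fun k => brk b (g k) (n k - 1)) with hβ
    have hβle : β ≤ ω := Finset.sup'_le _ _ fun k _ => (hnk k).1
    obtain ⟨k₀, -, hk₀⟩ :=
      Finset.exists_mem_eq_sup' (Finset.univ_nonempty) (fun k => brk b (g k) (n k - 1))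
    have hk₀' : β = brk b (g k₀) (n k₀ - 1) := by rw [hβ, hk₀]
    have hβround : ∀ k,
        round ((-(2 ^ b / (2 * π)) * Complex.arg (g k) + (2 ^ b / (2 * π)) * β : ℝ)) = n k := by
      intro k
      rw [round_brk_iff]
      exact ⟨Finset.le_sup' (fun k => brk b (g k) (n k - 1)) (Finset.mem_univ k),
        lt_of_le_of_lt hβle (hnk k).2⟩
    have hfβ : f β = f ω := fcong β ω fun k => by rw [hβround k, hn]
    have hβlb : ω - 2 * π / 2 ^ b < β := by
      have h1 : brk b (g k₀) (n k₀) = brk b (g k₀) (n k₀ - 1) + 2 * π / 2 ^ b := by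
        unfold brk; push_cast; ring
      have h2 := (hnk k₀).2
      rw [h1, ← hk₀'] at h2
      linarith
    rcases le_or_gt 0 β with h0 | h0
    · refine ⟨β, ?_, hfβ⟩
      rw [hk₀']
      exact mem_searchSet_of_brk b g k₀ _ (hk₀' ▸ h0) (hk₀' ▸ lt_of_le_of_lt hβle hω.2)
    · have hdivle : 2 * π / 2 ^ b ≤ 2 * π := by
        apply div_le_self (by positivity)
        exact_mod_cast Nat.one_le_two_pow
      have hm0 : 0 ≤ β + 2 * π := by
        have := hω.1
        linarith
      have hm2 : β + 2 * π < 2 * π := by linarith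
      have hbrk2 : β + 2 * π = brk b (g k₀) (n k₀ - 1 + 2 ^ b) := by
        rw [hk₀']
        unfold brk
        push_cast
        field_simp
        ring
      refine ⟨β + 2 * π, ?_, ?_⟩
      · rw [hbrk2]
        exact mem_searchSet_of_brk b g k₀ _ (hbrk2 ▸ hm0) (hbrk2 ▸ hm2)
      · rw [fper β, hfβ]
  -- the finite index set
  set T : Finset (ℕ × Fin K) := Finset.range (2 ^ b) ×ˢ Finset.univ with hT
  set e : ℕ × Fin K → ℝ := fun p =>
    Complex.arg (g p.2) + (2 * π / 2 ^ b) *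
      ((⌈-(2 ^ b * Complex.arg (g p.2)) / (2 * π) - 1 / 2⌉ : ℤ) + (p.1 : ℝ) + 1 / 2) with he
  have hSe : ∀ x, x ∈ searchSet b g ↔ ∃ p ∈ T, e p = x := by
    intro x
    constructor
    · rintro ⟨s, hs, k, rfl⟩
      exact ⟨(s, k), by simp [hT, Finset.mem_product, Finset.mem_range, hs], rfl⟩
    · rintro ⟨⟨s, k⟩, hp, rfl⟩
      have hs : s < 2 ^ b := by
        simp [hT, Finset.mem_product, Finset.mem_range] at hp
        exact hp
      exact ⟨s, hs, k, rfl⟩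
  have hTne : T.Nonempty := by
    refine ⟨(0, ⟨0, hK⟩), ?_⟩
    simp [hT, Finset.mem_product, Finset.mem_range]
  obtain ⟨p₀, hp₀, hmax⟩ := T.exists_max_image (fun p => f (e p)) hTne
  refine ⟨e p₀, (hSe _).mpr ⟨p₀, hp₀, rfl⟩, ?_, ?_⟩
  · intro ω hω
    obtain ⟨p, hp, rfl⟩ := (hSe ω).mp hω
    exact hmax p hp
  · have hIco : e p₀ ∈ Set.Ico (0 : ℝ) (2 * π) :=
      searchSet_subset_Ico b g ((hSe _).mpr ⟨p₀, hp₀, rfl⟩)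
    apply IsGreatest.csSup_eq
    constructor
    · exact ⟨e p₀, hIco, rfl⟩
    · rintro y ⟨ω, hω, rfl⟩
      obtain ⟨ω', hω'S, hfe⟩ := key ω hω
      obtain ⟨p, hp, rfl⟩ := (hSe ω').mp hω'S
      calc f ω = f (e p) := hfe.symm
        _ ≤ f (e p₀) := hmax p hp
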